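/- Core of Theorem 4.1 (rigidity for non-elementary Fuchsian groups): Let F : ℂ × ℂ → ℂ be holomorphic on the open set {(z,w) ∈ ℂ × ℂ : z ≠ w}. Let P ⊆ ℝ be a set such that for every p ∈ P there exist real numbers a, b, c, d with a·d − b·c = 1, |a + d| > 2, c ≠ 0, c·p + d ≠ 0 and (a·p + b)/(c·p + d) = p, and such that F is invariant under the associated Möbius transformation, meaning: for all z, w ∈ ℂ with z ≠ w, c·z + d ≠ 0 and c·w + d ≠ 0 one has F((a·z + b)/(c·z + d), (a·w + b)/(c·w + d)) = F(z, w). Suppose Λ ⊆ ℝ is nonempty, Λ is contained in the closure of P (closure taken in ℂ), and Λ has no isolated points, i.e. every x ∈ Λ lies in the closure of Λ \ {x}. Then F is constant on {(z,w) ∈ ℂ × ℂ : z ≠ w}. -/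

import Mathlib

open Set Filter Metric Topology

private lemma mob_sub (a b c d z w : ℂ) (h : a * d - b * c = 1)
    (hz : c * z + d ≠ 0) (hw : c * w + d ≠ 0) :
    (a * z + b) / (c * z + d) - (a * w + b) / (c * w + d)
      = (z - w) / ((c * z + d) * (c * w + d)) := by
  rw [div_sub_div _ _ hz hw]
  congr 1
  linear_combination (z - w) * h

private lemma isOpen_offdiag : IsOpen {p : ℂ × ℂ | p.1 ≠ p.2} :=
  isOpen_ne_fun continuous_fst continuous_snd

private lemma preconn_compl_finite (s : Set ℂ) (hs : s.Countable) :
    IsPreconnected sᶜ :=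
  (hs.isConnected_compl_of_one_lt_rank
    (by rw [Complex.rank_real_complex]; norm_num)).isPreconnected

/-- If `q` is an attracting fixed point of the Möbius map and `p` another fixed
point, invariance of `F` forces `z ↦ F (z, p)` to be constant. -/
private lemma key_const (F : ℂ × ℂ → ℂ)
    (hF : DifferentiableOn ℂ F {p : ℂ × ℂ | p.1 ≠ p.2})
    (a b c d q p : ℂ) (hdet : a * d - b * c = 1)
    (hpq : p ≠ q)
    (hq : 1 < ‖c * q + d‖) (hfixq : (a * q + b) / (c * q + d) = q)
    (hp : c * p + d ≠ 0) (hfixp : (a * p + b) / (c * p + d) = p)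
    (hinv : ∀ z w : ℂ, z ≠ w → c * z + d ≠ 0 → c * w + d ≠ 0 →
      F ((a * z + b) / (c * z + d), (a * w + b) / (c * w + d)) = F (z, w)) :
    ∀ z : ℂ, z ≠ p → F (z, p) = F (q, p) := by
  have hcq : c * q + d ≠ 0 := by
    intro h; rw [h] at hq; simp at hq; linarith
  set m : ℂ → ℂ := fun z => (a * z + b) / (c * z + d) with hm
  have hstep : ∀ z : ℂ, c * z + d ≠ 0 → m z - q = (z - q) / ((c * z + d) * (c * q + d)) := by
    intro z hz
    have := mob_sub a b c d z q hdet hz hcq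
    rw [hfixq] at this
    exact this
  -- a ball around q on which the denominator stays large
  have hcont : ContinuousAt (fun z : ℂ => ‖c * z + d‖) q := by fun_prop
  have hev : ∀ᶠ z in 𝓝 q, 1 < ‖c * z + d‖ := hcont.eventually_mem (Ioi_mem_nhds hq)
  rw [Metric.eventually_nhds_iff_ball] at hev
  obtain ⟨ε, hε, hball⟩ := hev
  have hpqpos : 0 < ‖p - q‖ := by
    rw [norm_pos_iff]; exact sub_ne_zero.mpr hpq
  set R : ℝ := min (ε / 2) (‖p - q‖ / 2) with hR
  have hRpos : 0 < R := lt_min (by linarith) (by linarith)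
  have hRball : ∀ z : ℂ, ‖z - q‖ ≤ R → 1 < ‖c * z + d‖ := by
    intro z hz
    apply hball
    rw [mem_ball_iff_norm]
    calc ‖z - q‖ ≤ R := hz
    _ ≤ ε / 2 := min_le_left _ _
    _ < ε := by linarith
  have hRnep : ∀ z : ℂ, ‖z - q‖ ≤ R → z ≠ p := by
    intro z hz h
    subst h
    have : R ≤ ‖z - q‖ / 2 := by
      have := min_le_right (ε / 2) (‖z - q‖ / 2); rw [← hR] at this; exact this
    have h0 : 0 < ‖z - q‖ := by
      rw [norm_pos_iff]; exact sub_ne_zero.mpr hpq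
    linarith
  set L : ℝ := ‖c * q + d‖ with hL
  have hL1 : 1 < L := hq
  -- contraction estimate
  have hcontr : ∀ z : ℂ, ‖z - q‖ ≤ R → c * z + d ≠ 0 ∧ ‖m z - q‖ ≤ (1 / L) * ‖z - q‖ := by
    intro z hz
    have h1 : 1 < ‖c * z + d‖ := hRball z hz
    have hne : c * z + d ≠ 0 := by
      intro h; rw [h] at h1; simp at h1; linarith
    refine ⟨hne, ?_⟩
    rw [hstep z hne]
    rw [norm_div, norm_mul]
    rw [one_div, inv_mul_eq_div]
    apply div_le_div_of_nonneg_left (norm_nonneg _) (by linarith) ?_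
    calc L = 1 * L := (one_mul L).symm
    _ ≤ ‖c * z + d‖ * L := by
        apply mul_le_mul_of_nonneg_right (le_of_lt h1) (by linarith)
  -- iteration
  have main : ∀ z : ℂ, ‖z - q‖ ≤ R → F (z, p) = F (q, p) := by
    intro z hzR
    have hiter : ∀ n : ℕ, ‖m^[n] z - q‖ ≤ (1 / L) ^ n * ‖z - q‖ ∧ F (m^[n] z, p) = F (z, p) := by
      intro n
      induction n with
      | zero => simp
      | succ n ih =>
        obtain ⟨ihb, ihF⟩ := ih
        have hLn : (1 / L) ^ n ≤ 1 := by
          apply pow_le_one₀ (by positivity)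
          rw [div_le_one (by linarith)]; linarith
        have hin : ‖m^[n] z - q‖ ≤ R := by
          calc ‖m^[n] z - q‖ ≤ (1 / L) ^ n * ‖z - q‖ := ihb
          _ ≤ 1 * ‖z - q‖ := mul_le_mul_of_nonneg_right hLn (norm_nonneg _)
          _ = ‖z - q‖ := one_mul _
          _ ≤ R := hzR
        obtain ⟨hne, hcon⟩ := hcontr _ hin
        have hnep : m^[n] z ≠ p := hRnep _ hin
        constructor
        · rw [Function.iterate_succ_apply']
          calc ‖m (m^[n] z) - q‖ ≤ (1 / L) * ‖m^[n] z - q‖ := hcon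
          _ ≤ (1 / L) * ((1 / L) ^ n * ‖z - q‖) := by
              apply mul_le_mul_of_nonneg_left ihb (by positivity)
          _ = (1 / L) ^ (n + 1) * ‖z - q‖ := by ring
        · rw [Function.iterate_succ_apply']
          have := hinv (m^[n] z) p hnep hne hp
          rw [hfixp] at this
          rw [hm] at this ⊢
          rw [this]
          exact ihF
    -- convergence
    have htends : Tendsto (fun n => m^[n] z) atTop (𝓝 q) := by
      rw [tendsto_iff_norm_sub_tendsto_zero]
      apply squeeze_zero (fun n => norm_nonneg _) (fun n => (hiter n).1)
      have : Tendsto (fun n : ℕ => (1 / L) ^ n) atTop (𝓝 0) := by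
        apply tendsto_pow_atTop_nhds_zero_of_lt_one (by positivity)
        rw [div_lt_one (by linarith)]; linarith
      simpa using this.mul_const ‖z - q‖
    have hmemqp : (q, p) ∈ {p : ℂ × ℂ | p.1 ≠ p.2} := Ne.symm hpq
    have hcF : ContinuousAt F (q, p) :=
      (hF.continuousOn.continuousAt (isOpen_offdiag.mem_nhds hmemqp))
    have h1 : Tendsto (fun n => F (m^[n] z, p)) atTop (𝓝 (F (q, p))) :=
      hcF.tendsto.comp (htends.prodMk_nhds tendsto_const_nhds)
    have h2 : Tendsto (fun n => F (m^[n] z, p)) atTop (𝓝 (F (z, p))) := by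
      have : (fun n => F (m^[n] z, p)) = fun _ => F (z, p) := funext fun n => (hiter n).2
      rw [this]; exact tendsto_const_nhds
    exact tendsto_nhds_unique h2 h1
  -- identity theorem
  intro z hzp
  have hUopen : IsOpen ({p}ᶜ : Set ℂ) := isOpen_compl_singleton
  have hUconn : IsPreconnected ({p}ᶜ : Set ℂ) :=
    preconn_compl_finite _ (countable_singleton p)
  have hfd : DifferentiableOn ℂ (fun z : ℂ => F (z, p)) ({p}ᶜ : Set ℂ) := by
    apply hF.comp ((differentiable_id.prodMk (differentiable_const p)).differentiableOn)
    intro x hx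
    exact hx
  have hfa : AnalyticOnNhd ℂ (fun z : ℂ => F (z, p)) ({p}ᶜ : Set ℂ) :=
    hfd.analyticOnNhd hUopen
  have hga : AnalyticOnNhd ℂ (fun _ : ℂ => F (q, p)) ({p}ᶜ : Set ℂ) :=
    analyticOnNhd_const
  have hqU : q ∈ ({p}ᶜ : Set ℂ) := fun h => hpq (mem_singleton_iff.mp h).symm
  have hevq : (fun z : ℂ => F (z, p)) =ᶠ[𝓝 q] fun _ => F (q, p) := by
    filter_upwards [closedBall_mem_nhds q hRpos] with x hx
    exact main x (by rwa [mem_closedBall_iff_norm] at hx)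
  have := hfa.eqOn_of_preconnected_of_eventuallyEq hga hUconn hqU hevq
  exact this hzp

private lemma inv_invariance (F : ℂ × ℂ → ℂ) (a b c d : ℂ) (hdet : a * d - b * c = 1)
    (hinv : ∀ z w : ℂ, z ≠ w → c * z + d ≠ 0 → c * w + d ≠ 0 →
      F ((a * z + b) / (c * z + d), (a * w + b) / (c * w + d)) = F (z, w)) :
    ∀ z w : ℂ, z ≠ w → (-c) * z + a ≠ 0 → (-c) * w + a ≠ 0 →
      F ((d * z + (-b)) / ((-c) * z + a), (d * w + (-b)) / ((-c) * w + a)) = F (z, w) := by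
  intro z w hzw hz hw
  set z' : ℂ := (d * z + (-b)) / ((-c) * z + a) with hz'def
  set w' : ℂ := (d * w + (-b)) / ((-c) * w + a) with hw'def
  have hdet' : d * a - (-b) * (-c) = 1 := by linear_combination hdet
  have hza : a - z * c ≠ 0 := fun h => hz (by linear_combination h)
  have hwa : a - w * c ≠ 0 := fun h => hw (by linear_combination h)
  have h1 : (c * z' + d) * ((-c) * z + a) = 1 := by
    rw [hz'def, ← mul_div_assoc, div_add' _ _ _ hz, div_mul_cancel₀ _ hz]
    linear_combination hdet
  have h2 : (c * w' + d) * ((-c) * w + a) = 1 := by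
    rw [hw'def, ← mul_div_assoc, div_add' _ _ _ hw, div_mul_cancel₀ _ hw]
    linear_combination hdet
  have hcz' : c * z' + d = ((-c) * z + a)⁻¹ := eq_inv_of_mul_eq_one_left (by linear_combination h1)
  have hcw' : c * w' + d = ((-c) * w + a)⁻¹ := eq_inv_of_mul_eq_one_left (by linear_combination h2)
  have hz'ne : c * z' + d ≠ 0 := by rw [hcz']; exact inv_ne_zero hz
  have hw'ne : c * w' + d ≠ 0 := by rw [hcw']; exact inv_ne_zero hw
  have haz' : (a * z' + b) / (c * z' + d) = z := by
    rw [hcz', div_eq_mul_inv, inv_inv, hz'def, ← mul_div_assoc, div_add' _ _ _ hz,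
      div_mul_cancel₀ _ hz]
    linear_combination z * hdet
  have haw' : (a * w' + b) / (c * w' + d) = w := by
    rw [hcw', div_eq_mul_inv, inv_inv, hw'def, ← mul_div_assoc, div_add' _ _ _ hw,
      div_mul_cancel₀ _ hw]
    linear_combination w * hdet
  have hz'w' : z' ≠ w' := by
    have hsub := mob_sub d (-b) (-c) a z w hdet' hz hw
    rw [← hz'def, ← hw'def] at hsub
    intro h
    rw [h, sub_self] at hsub
    have : z - w = 0 := by
      by_contra hne
      exact (div_ne_zero (sub_ne_zero.mpr hzw) (mul_ne_zero hz hw)) hsub.symm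
    exact hzw (sub_eq_zero.mp this)
  have := hinv z' w' hz'w' hz'ne hw'ne
  rw [haz', haw'] at this
  rw [← this]

/-- Constancy of `z ↦ F (z, p)` for each `p ∈ P`, via the quadratic for the
second fixed point and `key_const` (applied to the map or its inverse). -/
private lemma fixed_const (F : ℂ × ℂ → ℂ)
    (hF : DifferentiableOn ℂ F {p : ℂ × ℂ | p.1 ≠ p.2})
    (a b c d p : ℝ)
    (hdet : a * d - b * c = 1) (htr : 2 < |a + d|) (hc : c ≠ 0)
    (hpd : c * p + d ≠ 0) (hfix : (a * p + b) / (c * p + d) = p)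
    (hinv : ∀ z w : ℂ, z ≠ w → (c : ℂ) * z + (d : ℂ) ≠ 0 → (c : ℂ) * w + (d : ℂ) ≠ 0 →
      F (((a : ℂ) * z + b) / ((c : ℂ) * z + d),
         ((a : ℂ) * w + b) / ((c : ℂ) * w + d)) = F (z, w)) :
    ∀ z₁ z₂ : ℂ, z₁ ≠ (p : ℂ) → z₂ ≠ (p : ℂ) → F (z₁, (p : ℂ)) = F (z₂, (p : ℂ)) := by
  set q : ℝ := (a - d) / c - p with hqdef
  have hquadp : c * p ^ 2 + (d - a) * p - b = 0 := by
    have h := (div_eq_iff hpd).mp hfix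
    linear_combination -h
  have hcq : c * q + d = a - c * p := by
    rw [hqdef]; field_simp; ring
  have hquadq : c * q ^ 2 + (d - a) * q - b = 0 := by
    have e : c * q = a - d - c * p := by rw [hqdef]; field_simp
    have e2 : c * (c * q ^ 2 + (d - a) * q - b) = (c * q) * (c * q) + (d - a) * (c * q) - b * c := by
      ring
    have e3 : (c * q) * (c * q) + (d - a) * (c * q) - b * c = 0 := by
      rw [e]; linear_combination c * hquadp
    have := e2.trans e3
    exact (mul_eq_zero.mp this).resolve_left hc
  have hprod : (c * p + d) * (c * q + d) = 1 := by
    rw [hcq]; linear_combination hdet - c * hquadp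
  have hqd0 : c * q + d ≠ 0 := by
    intro h; rw [h, mul_zero] at hprod; exact zero_ne_one hprod
  have hpq : p ≠ q := by
    intro h
    have h4 : (a + d) ^ 2 = 4 := by
      have hs : (c * p + d) + (c * q + d) = a + d := by rw [hcq]; ring
      rw [← h] at hprod hs
      linear_combination (-(a + d + 2 * (c * p + d))) * hs + 4 * hprod
    nlinarith [sq_abs (a + d), abs_nonneg (a + d), htr]
  have hfixq : (a * q + b) / (c * q + d) = q := by
    rw [div_eq_iff hqd0]; linear_combination -hquadq
  have hprodq : (c * q + d) * (a - c * q) = 1 := by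
    linear_combination hdet - c * hquadq
  have hy0 : c * q + d ≠ 0 := hqd0
  -- casts
  have hdetC : (a : ℂ) * (d : ℂ) - (b : ℂ) * (c : ℂ) = 1 := by exact_mod_cast hdet
  have hpqC : (p : ℂ) ≠ (q : ℂ) := by exact_mod_cast hpq
  have hpdC : (c : ℂ) * (p : ℂ) + (d : ℂ) ≠ 0 := by exact_mod_cast hpd
  have hqdC : (c : ℂ) * (q : ℂ) + (d : ℂ) ≠ 0 := by exact_mod_cast hqd0
  have hfixC : ((a : ℂ) * (p : ℂ) + (b : ℂ)) / ((c : ℂ) * (p : ℂ) + (d : ℂ)) = (p : ℂ) := by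
    exact_mod_cast congrArg (Complex.ofReal) hfix
  have hfixqC : ((a : ℂ) * (q : ℂ) + (b : ℂ)) / ((c : ℂ) * (q : ℂ) + (d : ℂ)) = (q : ℂ) := by
    exact_mod_cast congrArg (Complex.ofReal) hfixq
  have key : ∀ z : ℂ, z ≠ (p : ℂ) → F (z, (p : ℂ)) = F ((q : ℂ), (p : ℂ)) := by
    by_cases hy : 1 < |c * q + d|
    · -- q is attracting for the map itself
      apply key_const F hF (a : ℂ) (b : ℂ) (c : ℂ) (d : ℂ) (q : ℂ) (p : ℂ) hdetC hpqC ?_ hfixqC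
        hpdC hfixC hinv
      have : ((c * q + d : ℝ) : ℂ) = (c : ℂ) * (q : ℂ) + (d : ℂ) := by push_cast; ring
      rw [← this, Complex.norm_real]
      exact hy
    · -- |c q + d| < 1 : q attracting for the inverse map
      have habs0 : |c * q + d| ≠ 0 := fun h => hqd0 (abs_eq_zero.mp h)
      have habs1 : |c * q + d| ≠ 1 := by
        intro h1
        have hsq : (c * q + d) ^ 2 = 1 := by
          rw [← sq_abs, h1, one_pow]
        have hxy : c * p + d = c * q + d := by
          have h0 : (c * q + d) * ((c * p + d) - (c * q + d)) = 0 := by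
            linear_combination hprod - hsq
          rcases mul_eq_zero.mp h0 with h | h
          · exact absurd h hqd0
          · linarith [sub_eq_zero.mp h]
        have hs : (c * p + d) + (c * q + d) = a + d := by rw [hcq]; ring
        have h4 : (a + d) ^ 2 = 4 := by
          rw [hxy] at hs hprod
          linear_combination (-(a + d + 2 * (c * q + d))) * hs + 4 * hprod
        nlinarith [sq_abs (a + d), abs_nonneg (a + d), htr]
      have hylt : |c * q + d| < 1 := lt_of_le_of_ne (not_lt.mp hy) habs1
      have hygt0 : 0 < |c * q + d| := lt_of_le_of_ne (abs_nonneg _) (Ne.symm habs0)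
      have hinvgt : 1 < |a - c * q| := by
        have := abs_mul (c * q + d) (a - c * q)
        rw [hprodq, abs_one] at this
        have h1 : |c * q + d| * |a - c * q| = 1 := this.symm
        nlinarith [abs_nonneg (a - c * q)]
      -- apply key_const to the inverse transformation
      have hinv' := inv_invariance F (a : ℂ) (b : ℂ) (c : ℂ) (d : ℂ) hdetC hinv
      have hdetC' : (d : ℂ) * (a : ℂ) - (-(b : ℂ)) * (-(c : ℂ)) = 1 := by
        linear_combination hdetC
      have hnormq : 1 < ‖(-(c : ℂ)) * (q : ℂ) + (a : ℂ)‖ := by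
        have : ((a - c * q : ℝ) : ℂ) = (-(c : ℂ)) * (q : ℂ) + (a : ℂ) := by push_cast; ring
        rw [← this, Complex.norm_real]
        exact hinvgt
      have hfixqC' : ((d : ℂ) * (q : ℂ) + (-(b : ℂ))) / ((-(c : ℂ)) * (q : ℂ) + (a : ℂ))
          = (q : ℂ) := by
        have hacq : a - c * q ≠ 0 := by
          intro h; rw [h, mul_zero] at hprodq; exact zero_ne_one hprodq
        have hnzq : -c * q + a ≠ 0 := by
          intro h; exact hacq (by linarith)
        have hr : (d * q + -b) / (-c * q + a) = q := by
          rw [div_eq_iff hnzq]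
          linear_combination hquadq
        exact_mod_cast congrArg (Complex.ofReal) hr
      have hpdC' : (-(c : ℂ)) * (p : ℂ) + (a : ℂ) ≠ 0 := by
        have : ((a - c * p : ℝ) : ℂ) = (-(c : ℂ)) * (p : ℂ) + (a : ℂ) := by push_cast; ring
        rw [← this]
        have : a - c * p ≠ 0 := by rw [← hcq]; exact hqd0
        exact_mod_cast Complex.ofReal_ne_zero.mpr this
      have hfixC' : ((d : ℂ) * (p : ℂ) + (-(b : ℂ))) / ((-(c : ℂ)) * (p : ℂ) + (a : ℂ))
          = (p : ℂ) := by
        have hnz : -c * p + a ≠ 0 := by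
          intro h; apply hqd0; rw [hcq]; linarith
        have hr : (d * p + -b) / (-c * p + a) = p := by
          rw [div_eq_iff hnz]; linear_combination hquadp
        exact_mod_cast congrArg (Complex.ofReal) hr
      exact key_const F hF (d : ℂ) (-(b : ℂ)) (-(c : ℂ)) (a : ℂ) (q : ℂ) (p : ℂ) hdetC' hpqC
        hnormq hfixqC' hpdC' hfixC' hinv'
  intro z₁ z₂ h1 h2
  rw [key z₁ h1, key z₂ h2]

/-- If for every `s` in a set `S` the function `z ↦ F (z, s)` is constant, and
`S` accumulates on a nonempty perfect set `Λ`, then `F (z, w)` does not depend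
on its first argument. -/
private lemma slot_const (F : ℂ × ℂ → ℂ)
    (hF : DifferentiableOn ℂ F {p : ℂ × ℂ | p.1 ≠ p.2})
    (S : Set ℂ)
    (hconst : ∀ s ∈ S, ∀ z₁ z₂ : ℂ, z₁ ≠ s → z₂ ≠ s → F (z₁, s) = F (z₂, s))
    (Λ : Set ℂ) (hΛne : Λ.Nonempty) (hΛS : Λ ⊆ closure S)
    (hΛperf : ∀ x ∈ Λ, x ∈ closure (Λ \ {x})) :
    ∀ z₁ z₂ w : ℂ, z₁ ≠ w → z₂ ≠ w → F (z₁, w) = F (z₂, w) := by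
  intro z₁ z₂ w h1 h2
  rcases eq_or_ne z₁ z₂ with rfl | hz12
  · rfl
  set T : Set ℂ := {z₁, z₂} with hT
  have hTfin : T.Finite := (finite_singleton z₂).insert z₁
  have hUopen : IsOpen Tᶜ := hTfin.isClosed.isOpen_compl
  have hUconn : IsPreconnected Tᶜ := preconn_compl_finite T hTfin.countable
  set g : ℂ → ℂ := fun w => F (z₁, w) - F (z₂, w) with hg
  have hgd : DifferentiableOn ℂ g Tᶜ := by
    apply DifferentiableOn.sub
    · apply hF.comp (((differentiable_const z₁).prodMk differentiable_id).differentiableOn)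
      intro x hx h
      simp only [id_eq] at h
      exact hx (by rw [← h]; exact mem_insert _ _)
    · apply hF.comp (((differentiable_const z₂).prodMk differentiable_id).differentiableOn)
      intro x hx h
      simp only [id_eq] at h
      exact hx (by rw [← h]; exact mem_insert_of_mem _ rfl)
  have hgS : ∀ s, s ∈ S → s ∈ Tᶜ → g s = 0 := by
    intro s hs hsU
    have hs1 : z₁ ≠ s := fun h => hsU (by rw [← h]; exact mem_insert _ _)
    have hs2 : z₂ ≠ s := fun h => hsU (by rw [← h]; exact mem_insert_of_mem _ rfl)
    exact sub_eq_zero.mpr (hconst s hs z₁ z₂ hs1 hs2)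
  have hgΛ : ∀ x, x ∈ Λ → x ∈ Tᶜ → g x = 0 := by
    intro x hx hxU
    have hxc : x ∈ closure (S ∩ Tᶜ) := by
      rw [mem_closure_iff_nhds] at *
      intro t ht
      obtain ⟨y, hy⟩ := mem_closure_iff_nhds.mp (hΛS hx) (t ∩ Tᶜ)
        (inter_mem ht (hUopen.mem_nhds hxU))
      exact ⟨y, hy.1.1, hy.2, hy.1.2⟩
    have hNB : (𝓝[S ∩ Tᶜ] x).NeBot := mem_closure_iff_nhdsWithin_neBot.mp hxc
    have hcont : ContinuousAt g x :=
      (hgd.continuousOn.continuousAt (hUopen.mem_nhds hxU))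
    have ht1 : Tendsto g (𝓝[S ∩ Tᶜ] x) (𝓝 (g x)) :=
      hcont.tendsto.mono_left nhdsWithin_le_nhds
    have ht2 : Tendsto g (𝓝[S ∩ Tᶜ] x) (𝓝 0) := by
      apply Tendsto.congr' ?_ (tendsto_const_nhds (α := ℂ))
      filter_upwards [eventually_mem_nhdsWithin] with y hy
      exact (hgS y hy.1 hy.2).symm
    exact tendsto_nhds_unique ht1 ht2
  -- a point of Λ outside T
  obtain ⟨x₀, hx₀Λ, hx₀U⟩ : ∃ x₀ ∈ Λ, x₀ ∈ Tᶜ := by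
    by_contra hcon
    push_neg at hcon
    obtain ⟨x, hx⟩ := hΛne
    have hsub : Λ \ {x} ⊆ T \ {x} := fun y hy =>
      ⟨not_not.mp (hcon y hy.1), hy.2⟩
    have hcl : closure (Λ \ {x}) ⊆ T \ {x} :=
      closure_minimal hsub hTfin.diff.isClosed
    exact (hcl (hΛperf x hx)).2 rfl
  have hfreq : ∃ᶠ y in 𝓝[≠] x₀, g y = 0 := by
    have hNB : (𝓝[Λ \ {x₀}] x₀).NeBot :=
      mem_closure_iff_nhdsWithin_neBot.mp (hΛperf x₀ hx₀Λ)
    have hev : ∀ᶠ y in 𝓝[Λ \ {x₀}] x₀, g y = 0 := by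
      filter_upwards [eventually_mem_nhdsWithin,
        eventually_nhdsWithin_of_eventually_nhds (hUopen.eventually_mem hx₀U)] with y hy hyU
      exact hgΛ y hy.1 hyU
    exact hev.frequently.filter_mono (nhdsWithin_mono _ (fun y hy => hy.2))
  have hzero : EqOn g 0 Tᶜ :=
    (hgd.analyticOnNhd hUopen).eqOn_zero_of_preconnected_of_frequently_eq_zero hUconn hx₀U hfreq
  have hwU : w ∈ Tᶜ := by
    intro hw
    rcases hw with h | h
    · exact h1 h.symm
    · exact h2 (mem_singleton_iff.mp h).symm
  have := hzero hwU
  simpa [hg, sub_eq_zero] using this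

/-- Core of Theorem 4.1: a holomorphic function on `{(z,w) : z ≠ w}` which is
invariant under, for each `p` in a set `P ⊆ ℝ`, some hyperbolic real Möbius
transformation fixing `p`, is constant, provided there is a nonempty set
`Λ ⊆ ℝ ⊆ ℂ` without isolated points contained in the closure of `P`. -/
theorem rigidity_nonelementary
    (F : ℂ × ℂ → ℂ)
    (hF : DifferentiableOn ℂ F {p : ℂ × ℂ | p.1 ≠ p.2})
    (P : Set ℝ)
    (hP : ∀ p ∈ P, ∃ a b c d : ℝ,
      a * d - b * c = 1 ∧ 2 < |a + d| ∧ c ≠ 0 ∧ c * p + d ≠ 0 ∧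
      (a * p + b) / (c * p + d) = p ∧
      (∀ z w : ℂ, z ≠ w → (c : ℂ) * z + (d : ℂ) ≠ 0 → (c : ℂ) * w + (d : ℂ) ≠ 0 →
        F (((a : ℂ) * z + b) / ((c : ℂ) * z + d),
           ((a : ℂ) * w + b) / ((c : ℂ) * w + d)) = F (z, w)))
    (Λ : Set ℂ)
    (hΛreal : Λ ⊆ Set.range ((↑) : ℝ → ℂ))
    (hΛne : Λ.Nonempty)
    (hΛP : Λ ⊆ closure ((fun p : ℝ => (p : ℂ)) '' P))
    (hΛperf : ∀ x ∈ Λ, x ∈ closure (Λ \ {x})) :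
    ∀ p ∈ {q : ℂ × ℂ | q.1 ≠ q.2}, ∀ p' ∈ {q : ℂ × ℂ | q.1 ≠ q.2},
      F p = F p' := by
  set S : Set ℂ := (fun p : ℝ => (p : ℂ)) '' P with hS
  have hconst1 : ∀ s ∈ S, ∀ z₁ z₂ : ℂ, z₁ ≠ s → z₂ ≠ s → F (z₁, s) = F (z₂, s) := by
    rintro s ⟨p, hp, rfl⟩ z₁ z₂ h1 h2
    obtain ⟨a, b, c, d, hdet, htr, hc, hpd, hfix, hinv⟩ := hP p hp
    exact fixed_const F hF a b c d p hdet htr hc hpd hfix hinv z₁ z₂ h1 h2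
  have hslot1 := slot_const F hF S hconst1 Λ hΛne hΛP hΛperf
  have hGd : DifferentiableOn ℂ (fun q : ℂ × ℂ => F (q.2, q.1)) {p : ℂ × ℂ | p.1 ≠ p.2} := by
    apply hF.comp ((differentiable_snd.prodMk differentiable_fst).differentiableOn)
    exact fun x hx => Ne.symm hx
  have hconst2 : ∀ s ∈ S, ∀ z₁ z₂ : ℂ, z₁ ≠ s → z₂ ≠ s →
      (fun q : ℂ × ℂ => F (q.2, q.1)) (z₁, s) = (fun q : ℂ × ℂ => F (q.2, q.1)) (z₂, s) := by
    rintro s ⟨p, hp, rfl⟩ z₁ z₂ h1 h2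
    obtain ⟨a, b, c, d, hdet, htr, hc, hpd, hfix, hinv⟩ := hP p hp
    have hinvG : ∀ z w : ℂ, z ≠ w → (c : ℂ) * z + (d : ℂ) ≠ 0 → (c : ℂ) * w + (d : ℂ) ≠ 0 →
        (fun q : ℂ × ℂ => F (q.2, q.1))
          (((a : ℂ) * z + b) / ((c : ℂ) * z + d), ((a : ℂ) * w + b) / ((c : ℂ) * w + d))
          = (fun q : ℂ × ℂ => F (q.2, q.1)) (z, w) :=
      fun z w hzw hz hw => hinv w z (Ne.symm hzw) hw hz
    exact fixed_const (fun q : ℂ × ℂ => F (q.2, q.1)) hGd a b c d p hdet htr hc hpd hfix hinvG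
      z₁ z₂ h1 h2
  have hslot2 := slot_const (fun q : ℂ × ℂ => F (q.2, q.1)) hGd S hconst2 Λ hΛne hΛP hΛperf
  rintro ⟨z, w⟩ hzw ⟨z', w'⟩ hzw'
  simp only [mem_setOf_eq] at hzw hzw'
  obtain ⟨u, hu⟩ : ∃ u : ℂ, u ∉ ({z, w, z', w'} : Set ℂ) := by
    have hfin : ({z, w, z', w'} : Set ℂ).Finite := by
      apply Set.Finite.insert; apply Set.Finite.insert; apply Set.Finite.insert
      exact finite_singleton _
    obtain ⟨u, hu⟩ := hfin.infinite_compl.nonempty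
    exact ⟨u, hu⟩
  simp only [mem_insert_iff, mem_singleton_iff, not_or] at hu
  obtain ⟨huz, huw, huz', huw'⟩ := hu
  calc F (z, w) = F (u, w) := hslot1 z u w hzw (fun h => huw h)
  _ = F (u, w') := hslot2 w w' u (fun h => huw h.symm) (fun h => huw' h.symm)
  _ = F (z', w') := hslot1 u z' w' (fun h => huw' h) hzw'
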